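/- Let P be a pot and suppose the construction-matrix system of P has a unique solution (r_1,...,r_p) with all r_j > 0 rational. Write each r_j = a_j/b_j in lowest terms and let L = lcm{b_j}. Then every graph in O(P) has order a multiple of L, and the smallest order of a graph in O(P) is L. -/
import Mathlib


/-- Suppose the construction-matrix system of a pot (with net-count
matrix `z`) has the unique solution `r`, all of whose coordinates are positive
rationals.  Writing each `r j` in lowest terms and letting `L` be the least common
multiple of the denominators, every realizable order (i.e. every `n = ∑ j R j` for a
nonzero nonnegative integer solution `R` of the balance equations) is a multiple of
`L`, and the smallest realizable order is exactly `L`. -/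
theorem stmt17 {m p : ℕ} (z : Fin m → Fin p → ℤ) (r : Fin p → ℚ)
    (hpos : ∀ j, 0 < r j)
    (huniq : ∀ s : Fin p → ℚ,
      ((∀ j, 0 ≤ s j) ∧ (∑ j, s j) = 1 ∧ ∀ i, (∑ j, (z i j : ℚ) * s j) = 0) ↔ s = r)
    (L : ℕ) (hL : L = Finset.univ.lcm fun j => (r j).den) :
    (∀ n : ℕ, 0 < n →
        (∃ R : Fin p → ℕ, (∑ j, R j) = n ∧ ∀ i, (∑ j, (R j : ℤ) * z i j) = 0) →
        L ∣ n) ∧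
      IsLeast {n : ℕ | 0 < n ∧
        ∃ R : Fin p → ℕ, (∑ j, R j) = n ∧ ∀ i, (∑ j, (R j : ℤ) * z i j) = 0} L := by
  obtain ⟨hrnn, hrsum, hrbal⟩ := (huniq r).mpr rfl
  have hLpos : 0 < L := by
    rw [hL]
    rcases Nat.eq_zero_or_pos (Finset.univ.lcm fun j => (r j).den) with h | h
    · exfalso
      rw [Finset.lcm_eq_zero_iff] at h
      simp only [Set.mem_image, Finset.mem_coe, Finset.mem_univ, true_and] at h
      obtain ⟨j, hj⟩ := h
      exact (r j).den_nz hj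
    · exact h
  have key : ∀ n : ℕ, 0 < n →
      (∃ R : Fin p → ℕ, (∑ j, R j) = n ∧ ∀ i, (∑ j, (R j : ℤ) * z i j) = 0) →
      L ∣ n := by
    rintro n hn ⟨R, hsum, hbal⟩
    have hn0 : (n : ℚ) ≠ 0 := by exact_mod_cast hn.ne'
    have hs : (fun j => (R j : ℚ) / n) = r := by
      apply (huniq _).mp
      refine ⟨fun j => by positivity, ?_, ?_⟩
      · rw [← Finset.sum_div]
        rw [show (∑ j, (R j : ℚ)) = (n : ℚ) by exact_mod_cast congrArg (Nat.cast : ℕ → ℚ) hsum]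
        exact div_self hn0
      · intro i
        have h0 : (∑ j, (R j : ℚ) * (z i j : ℚ)) = 0 := by exact_mod_cast hbal i
        have h1 : ∑ j, (z i j : ℚ) * ((R j : ℚ) / n) = (∑ j, (R j : ℚ) * (z i j : ℚ)) / n := by
          rw [Finset.sum_div]
          exact Finset.sum_congr rfl fun j _ => by ring
        rw [h1, h0, zero_div]
    rw [hL]
    apply Finset.lcm_dvd
    intro j _
    have hrj : r j = Rat.divInt (R j : ℤ) (n : ℤ) := by
      rw [← congrFun hs j, Rat.divInt_eq_div]; push_cast; ring
    have : ((r j).den : ℤ) ∣ (n : ℤ) := by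
      rw [hrj]
      exact Rat.den_dvd _ _
    exact_mod_cast this
  refine ⟨key, ⟨⟨hLpos, ?_⟩, fun n hn => Nat.le_of_dvd hn.1 (key n hn.1 hn.2)⟩⟩
  have hcast : ∀ j, ((L / (r j).den * (r j).num.toNat : ℕ) : ℚ) = (L : ℚ) * r j := by
    intro j
    have hd : (r j).den ∣ L := hL ▸ Finset.dvd_lcm (Finset.mem_univ j)
    have hnum : 0 < (r j).num := Rat.num_pos.mpr (hpos j)
    have h1 : (((r j).num.toNat : ℕ) : ℚ) = ((r j).num : ℚ) := by
      exact_mod_cast Int.toNat_of_nonneg hnum.le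
    rw [Nat.cast_mul, Nat.cast_div hd (by exact_mod_cast (r j).den_nz), h1,
      div_mul_eq_mul_div, mul_div_assoc, Rat.num_div_den]
  refine ⟨fun j => L / (r j).den * (r j).num.toNat, ?_, ?_⟩
  · have : ((∑ j, L / (r j).den * (r j).num.toNat : ℕ) : ℚ) = (L : ℚ) := by
      rw [Nat.cast_sum, Finset.sum_congr rfl fun j _ => hcast j, ← Finset.mul_sum, hrsum,
        mul_one]
    exact_mod_cast this
  · intro i
    have : ((∑ j, ((L / (r j).den * (r j).num.toNat : ℕ) : ℤ) * z i j : ℤ) : ℚ) = 0 := by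
      rw [Int.cast_sum]
      have h2 : ∀ j ∈ Finset.univ, ((((L / (r j).den * (r j).num.toNat : ℕ) : ℤ) * z i j : ℤ) : ℚ)
          = (L : ℚ) * ((z i j : ℚ) * r j) := by
        intro j _
        rw [Int.cast_mul, Int.cast_natCast, hcast j]
        ring
      rw [Finset.sum_congr rfl h2, ← Finset.mul_sum, hrbal i, mul_zero]
    exact_mod_cast this
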